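/- A strategy profile ⟨e_k⟩_{k∈ℤ} is a Nash equilibrium of game G₂ if and only if (1) e_k ∈ ℤ/3ℤ for each k ∈ ℤ, and (2) e_{k+2} − e_k ∈ {[0]₃, [1]₃} for each k ∈ ℤ. -/

import Mathlib

structure CellularGame where
  S : Type
  u : S → S → S → ℝ

def NashEq (G : CellularGame) (e : ℤ → G.S) : Prop :=
  ∀ (i : ℤ) (s : G.S), G.u (e (i-1)) s (e (i+1)) ≤ G.u (e (i-1)) (e i) (e (i+1))

def Ichg (G : CellularGame) (a b : ℤ) : Prop :=
  ∀ e₁ e₂ : ℤ → G.S, NashEq G e₁ → NashEq G e₂ →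
    ∃ e : ℤ → G.S, NashEq G e ∧ e a = e₁ a ∧ e b = e₂ b

abbrev G2S := ZMod 3 ⊕ (Bool × Bool)

def u1 (x y z : G2S) : ℝ :=
  match x, y, z with
  | Sum.inl a, Sum.inr _, Sum.inl c => if c = a + 2 then 1 else 0
  | _, Sum.inr _, _ => 1
  | _, _, _ => 0

def u2 (x y : G2S) : ℝ :=
  match x, y with
  | Sum.inr (_, x2), Sum.inr (y1, _) => if x2 = y1 then 1 else 0
  | _, _ => 0

def u3 (y z : G2S) : ℝ :=
  match y, z with
  | Sum.inr (_, y2), Sum.inr (z1, _) => if y2 ≠ z1 then 1 else 0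
  | _, _ => 0

def G2 : CellularGame := ⟨G2S, fun x y z => u1 x y z + u2 x y + u3 y z⟩

lemma G2u (x y z : G2S) : G2.u x y z = u1 x y z + u2 x y + u3 y z := rfl

lemma inl_step (e : ℤ → G2.S) (h : NashEq G2 e) (j : ℤ) (a : ZMod 3)
    (hj : e j = Sum.inl a) :
    (∃ b, e (j-1) = Sum.inl b) ∧ (∃ b, e (j+1) = Sum.inl b) := by
  have hne := h j (Sum.inr (false, false))
  rw [hj] at hne
  rcases hx : e (j-1) with b | ⟨p1, p2⟩ <;> rcases hz : e (j+1) with c | ⟨q1, q2⟩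
  · exact ⟨⟨b, rfl⟩, ⟨c, rfl⟩⟩
  · exfalso
    rw [hx, hz, G2u, G2u] at hne
    simp only [u1, u2, u3] at hne
    cases q1 <;> norm_num at hne
  · exfalso
    rw [hx, hz, G2u, G2u] at hne
    simp only [u1, u2, u3] at hne
    cases p2 <;> norm_num at hne
  · exfalso
    rw [hx, hz, G2u, G2u] at hne
    simp only [u1, u2, u3] at hne
    cases p2 <;> cases q1 <;> norm_num at hne

lemma allinr_contra (e : ℤ → G2.S) (h : NashEq G2 e) (i : ℤ)
    (p q r s : Bool × Bool)
    (hp : e (i-1) = Sum.inr p) (hq : e i = Sum.inr q)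
    (hr : e (i+1) = Sum.inr r) (hs : e (i+2) = Sum.inr s) : False := by
  obtain ⟨p1, p2⟩ := p; obtain ⟨q1, q2⟩ := q
  obtain ⟨r1, r2⟩ := r; obtain ⟨s1, s2⟩ := s
  have h1 := h i (Sum.inr (q1, !r1))
  rw [hp, hq, hr, G2u, G2u] at h1
  have h2 := h (i+1) (Sum.inr (q2, r2))
  rw [show i+1-1 = i from by ring, show i+1+1 = i+2 from by ring, hq, hr, hs,
    G2u, G2u] at h2
  simp only [u1, u2, u3] at h1 h2
  cases p2 <;> cases q1 <;> cases q2 <;> cases r1 <;> cases r2 <;> cases s1 <;>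
    (revert h1 h2; norm_num)

theorem g2_ne (e : ℤ → G2.S) :
    NashEq G2 e ↔ ∃ c : ℤ → ZMod 3, (∀ k : ℤ, e k = Sum.inl (c k)) ∧
      ∀ k : ℤ, c (k+2) - c k ∈ ({0, 1} : Set (ZMod 3)) := by
  constructor
  · intro h
    have hall : ∀ k : ℤ, ∃ a, e k = Sum.inl a := by
      intro k
      rcases hk : e k with a | q
      · exact ⟨a, rfl⟩
      exfalso
      have h1 : ∃ p, e (k+1) = Sum.inr p := by
        rcases hk1 : e (k+1) with b | p
        · obtain ⟨⟨b', hb'⟩, -⟩ := inl_step e h (k+1) b hk1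
          rw [show k+1-1 = k from by ring, hk] at hb'; exact absurd hb' (by simp)
        · exact ⟨p, rfl⟩
      obtain ⟨r, hr⟩ := h1
      have h2 : ∃ p, e (k-1) = Sum.inr p := by
        rcases hk1 : e (k-1) with b | p
        · obtain ⟨-, ⟨b', hb'⟩⟩ := inl_step e h (k-1) b hk1
          rw [show k-1+1 = k from by ring, hk] at hb'; exact absurd hb' (by simp)
        · exact ⟨p, rfl⟩
      obtain ⟨p, hp⟩ := h2
      have h3 : ∃ s, e (k+2) = Sum.inr s := by
        rcases hk1 : e (k+2) with b | s
        · obtain ⟨⟨b', hb'⟩, -⟩ := inl_step e h (k+2) b hk1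
          rw [show k+2-1 = k+1 from by ring, hr] at hb'; exact absurd hb' (by simp)
        · exact ⟨s, rfl⟩
      obtain ⟨s, hs⟩ := h3
      exact allinr_contra e h k p q r s hp hk hr hs
    choose c hc using hall
    refine ⟨c, hc, fun k => ?_⟩
    have hne := h (k+1) (Sum.inr (false, false))
    rw [show k+1-1 = k from by ring, show k+1+1 = k+2 from by ring,
      hc k, hc (k+1), hc (k+2), G2u, G2u] at hne
    simp only [u1, u2, u3] at hne
    have hd : c (k+2) ≠ c k + 2 := by
      intro hcc
      rw [if_pos hcc] at hne
      norm_num at hne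
    have key : ∀ d d' : ZMod 3, d ≠ d' + 2 → d - d' = 0 ∨ d - d' = 1 := by decide
    rcases key _ _ hd with h' | h' <;> simp [h']
  · rintro ⟨c, hc, hcond⟩ i s
    rw [hc (i-1), hc (i+1), hc i, G2u]; erw [G2u]
    have hd : c (i+1) ≠ c (i-1) + 2 := by
      have hh := hcond (i-1)
      rw [show i-1+2 = i+1 from by ring] at hh
      intro hcc
      rw [hcc] at hh
      simp at hh
      revert hh
      decide
    rcases s with b | ⟨b1, b2⟩
    · simp only [u1, u2, u3]
      norm_num
    · simp only [u1, u2, u3]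
      rw [if_neg hd]
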